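/- With the setup of a pre-F-frame {g_i} for X_F with respect to Θ_F: if Θ_s = Θ (a fixed BK-space) for all s, then X_F is isomorphic (as a topological vector space) to a closed subspace of the Banach space Θ; in particular X_F is normable. -/

import Mathlib

open Filter Topology

noncomputable section

def IsNormOn {X : Type*} [AddCommGroup X] [Module ℝ X] (S : Set X) (N : X → ℝ) : Prop :=
  (0 : X) ∈ S ∧ (∀ c ∈ S, ∀ d ∈ S, c + d ∈ S) ∧ (∀ (a : ℝ), ∀ c ∈ S, a • c ∈ S) ∧
  (∀ c ∈ S, 0 ≤ N c) ∧ (∀ c ∈ S, N c = 0 → c = 0) ∧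
  (∀ c ∈ S, ∀ d ∈ S, N (c + d) ≤ N c + N d) ∧
  (∀ (a : ℝ), ∀ c ∈ S, N (a • c) = |a| * N c)

def IsBanachOn {X : Type*} [AddCommGroup X] [Module ℝ X] (S : Set X) (N : X → ℝ) : Prop :=
  IsNormOn S N ∧ ∀ u : ℕ → X, (∀ n, u n ∈ S) →
    (∀ ε > 0, ∃ M, ∀ m ≥ M, ∀ n ≥ M, N (u m - u n) < ε) →
    ∃ x ∈ S, Tendsto (fun n => N (u n - x)) atTop (nhds 0)

def IsBKOn (S : Set (ℕ → ℝ)) (N : (ℕ → ℝ) → ℝ) : Prop :=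
  IsBanachOn S N ∧ ∀ i, ∃ K : ℝ, ∀ c ∈ S, |c i| ≤ K * N c

def IsScale {X : Type*} [AddCommGroup X] [Module ℝ X] (S : ℕ → Set X) (N : ℕ → X → ℝ) : Prop :=
  (∀ s, IsBanachOn (S s) (N s)) ∧ (∀ s, S (s+1) ⊆ S s) ∧
  (∀ s, ∀ f ∈ S (s+1), N s f ≤ N (s+1) f) ∧
  (∀ s, ∀ f ∈ S s, ∀ ε > 0, ∃ h ∈ ⋂ t, S t, N s (f - h) < ε)

lemma IsNormOn.sub_mem' {X : Type*} [AddCommGroup X] [Module ℝ X] {S : Set X} {N : X → ℝ}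
    (h : IsNormOn S N) {c d : X} (hc : c ∈ S) (hd : d ∈ S) : c - d ∈ S := by
  rw [sub_eq_add_neg, ← neg_one_smul ℝ d]
  exact h.2.1 c hc _ (h.2.2.1 (-1) d hd)

lemma IsNormOn.zero' {X : Type*} [AddCommGroup X] [Module ℝ X] {S : Set X} {N : X → ℝ}
    (h : IsNormOn S N) : N 0 = 0 := by
  have := h.2.2.2.2.2.2 0 0 h.1
  simpa using this

lemma IsNormOn.symm' {X : Type*} [AddCommGroup X] [Module ℝ X] {S : Set X} {N : X → ℝ}
    (h : IsNormOn S N) {c d : X} (hd : d ∈ S) (hc : c ∈ S) : N (c - d) = N (d - c) := by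
  have := h.2.2.2.2.2.2 (-1) (d - c) (h.sub_mem' hd hc)
  simpa [neg_sub] using this

lemma IsNormOn.sub_le' {X : Type*} [AddCommGroup X] [Module ℝ X] {S : Set X} {N : X → ℝ}
    (h : IsNormOn S N) {a b c : X} (ha : a ∈ S) (hb : b ∈ S) (hc : c ∈ S) :
    N (a - c) ≤ N (a - b) + N (b - c) := by
  have := h.2.2.2.2.2.1 (a - b) (h.sub_mem' ha hb) (b - c) (h.sub_mem' hb hc)
  simpa using this

theorem preFframe_constant_theta_normable
    {X : Type*} [AddCommGroup X] [Module ℝ X]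
    (S : ℕ → Set X) (N : ℕ → X → ℝ) (hX : IsScale S N)
    (S0 : Set (ℕ → ℝ)) (N0 : (ℕ → ℝ) → ℝ) (hBK : IsBKOn S0 N0)
    (g : ℕ → X →ₗ[ℝ] ℝ) (A B : ℕ → ℝ)
    (hA : ∀ s, 0 < A s) (hAB : ∀ s, A s ≤ B s)
    (hframe : ∀ f ∈ ⋂ s, S s, (fun i => g i f) ∈ S0 ∧
      ∀ s, A s * N s f ≤ N0 (fun i => g i f) ∧ N0 (fun i => g i f) ≤ B s * N s f) :
    (∀ f ∈ ⋂ s, S s, ∀ h ∈ ⋂ s, S s, (fun i => g i f) = (fun i => g i h) → f = h) ∧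
    (∀ c ∈ S0, (∀ ε > 0, ∃ f ∈ ⋂ s, S s, N0 ((fun i => g i f) - c) < ε) →
      ∃ f ∈ ⋂ s, S s, (fun i => g i f) = c) ∧
    (∀ s, ∃ C > 0, ∀ f ∈ ⋂ t, S t, N s f ≤ C * N0 (fun i => g i f)) ∧
    (∃ C > 0, ∀ f ∈ ⋂ t, S t, N0 (fun i => g i f) ≤ C * N 0 f) ∧
    (∀ s, ∃ C > 0, ∀ f ∈ ⋂ t, S t, N s f ≤ C * N 0 f) := by
  obtain ⟨⟨hΘnorm, hΘcompl⟩, hBKcoord⟩ := hBK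
  obtain ⟨hBan, hmono, hNmono, _⟩ := hX
  have hnormX : ∀ s, IsNormOn (S s) (N s) := fun s => (hBan s).1
  -- membership helpers
  have hmemI : ∀ {f : X}, f ∈ (⋂ s, S s) → ∀ s, f ∈ S s := fun hf s => Set.mem_iInter.mp hf s
  have hsubI : ∀ {f h : X}, f ∈ (⋂ s, S s) → h ∈ (⋂ s, S s) → f - h ∈ (⋂ s, S s) := by
    intro f h hf hh
    exact Set.mem_iInter.mpr fun s => (hnormX s).sub_mem' (hmemI hf s) (hmemI hh s)
  -- Part 1: injectivity
  have part1 : ∀ f ∈ ⋂ s, S s, ∀ h ∈ ⋂ s, S s, (fun i => g i f) = (fun i => g i h) → f = h := by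
    intro f hf h hh heq
    have hfh : f - h ∈ ⋂ s, S s := hsubI hf hh
    have hzero : (fun i => g i (f - h)) = (0 : ℕ → ℝ) := by
      funext i
      have := congrFun heq i
      simp only [map_sub]
      simp [this]
    have h1 := (hframe (f - h) hfh).2 0 |>.1
    rw [hzero, hΘnorm.zero'] at h1
    have h2 : 0 ≤ N 0 (f - h) := (hnormX 0).2.2.2.1 _ (hmemI hfh 0)
    have h3 : N 0 (f - h) = 0 := by nlinarith [hA 0]
    have := (hnormX 0).2.2.2.2.1 _ (hmemI hfh 0) h3
    exact sub_eq_zero.mp this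
  refine ⟨part1, ?_, ?_, ?_, ?_⟩
  · -- Part 2: closed range
    intro c hc hclose
    have hex : ∀ n : ℕ, ∃ f ∈ ⋂ s, S s, N0 ((fun i => g i f) - c) < 1 / (n + 1) := by
      intro n
      exact hclose (1 / (n + 1)) (by positivity)
    choose f hfmem hfap using hex
    set Gf : ℕ → (ℕ → ℝ) := fun n => fun i => g i (f n) with hGf
    have hGfmem : ∀ n, Gf n ∈ S0 := fun n => (hframe (f n) (hfmem n)).1
    have hGfsub : ∀ m n, Gf m - Gf n = fun i => g i (f m - f n) := by
      intro m n; funext i; simp [hGf, map_sub]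
    -- Cauchy estimate on the sequence side
    have hGfC : ∀ m n : ℕ, N0 (Gf m - Gf n) ≤ 1 / (m + 1) + 1 / (n + 1) := by
      intro m n
      have := hΘnorm.sub_le' (a := Gf m) (b := c) (c := Gf n) (hGfmem m) hc (hGfmem n)
      have hsymm := hΘnorm.symm' (c := c) (d := Gf n) (hGfmem n) hc
      calc N0 (Gf m - Gf n) ≤ N0 (Gf m - c) + N0 (c - Gf n) := this
        _ = N0 (Gf m - c) + N0 (Gf n - c) := by rw [hsymm]
        _ ≤ 1 / (m + 1) + 1 / (n + 1) := add_le_add (le_of_lt (hfap m)) (le_of_lt (hfap n))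
    -- Cauchy in each N s, get limits
    have hcauchy : ∀ s, ∀ ε > 0, ∃ M, ∀ m ≥ M, ∀ n ≥ M, N s (f m - f n) < ε := by
      intro s ε hε
      obtain ⟨M, hM⟩ := exists_nat_gt (2 / (A s * ε))
      refine ⟨M, fun m hm n hn => ?_⟩
      have hAs := hA s
      have hfmn : f m - f n ∈ ⋂ t, S t := hsubI (hfmem m) (hfmem n)
      have h1 := (hframe _ hfmn).2 s |>.1
      rw [← hGfsub] at h1
      have h2 : N0 (Gf m - Gf n) ≤ 1 / (m + 1) + 1 / (n + 1) := hGfC m n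
      have hMm : 1 / ((m : ℝ) + 1) ≤ 1 / ((M : ℝ) + 1) := by
        apply one_div_le_one_div_of_le (by positivity)
        have : (M : ℝ) ≤ m := Nat.cast_le.mpr hm
        linarith
      have hMn : 1 / ((n : ℝ) + 1) ≤ 1 / ((M : ℝ) + 1) := by
        apply one_div_le_one_div_of_le (by positivity)
        have : (M : ℝ) ≤ n := Nat.cast_le.mpr hn
        linarith
      have hMbig : 2 / ((M : ℝ) + 1) < A s * ε := by
        rw [div_lt_iff₀ (by positivity)]
        have h2pos : 0 < A s * ε := by positivity
        have := hM
        rw [div_lt_iff₀ h2pos] at this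
        nlinarith
      have : A s * N s (f m - f n) < A s * ε := by
        calc A s * N s (f m - f n) ≤ N0 (Gf m - Gf n) := h1
          _ ≤ 1 / (m + 1) + 1 / (n + 1) := h2
          _ ≤ 2 / ((M : ℝ) + 1) := by
              have : (2:ℝ) / ((M : ℝ) + 1) = 1 / ((M : ℝ) + 1) + 1 / ((M : ℝ) + 1) := by ring
              linarith
          _ < A s * ε := hMbig
      exact lt_of_mul_lt_mul_left this (le_of_lt hAs)
    have hxex : ∀ s, ∃ x ∈ S s, Tendsto (fun n => N s (f n - x)) atTop (nhds 0) :=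
      fun s => (hBan s).2 f (fun n => hmemI (hfmem n) s) (hcauchy s)
    choose x hxmem hxlim using hxex
    -- all limits coincide
    have hxeq : ∀ s, x (s + 1) = x s := by
      intro s
      have hx1s : x (s + 1) ∈ S s := hmono s (hxmem (s + 1))
      have hdiff : x (s + 1) - x s ∈ S s := (hnormX s).sub_mem' hx1s (hxmem s)
      have hNz : N s (x (s + 1) - x s) = 0 := by
        by_contra hne
        have hpos : 0 < N s (x (s + 1) - x s) :=
          lt_of_le_of_ne ((hnormX s).2.2.2.1 _ hdiff) (Ne.symm hne)
        set ε := N s (x (s + 1) - x s)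
        have h1 : ∀ᶠ n in atTop, N (s + 1) (f n - x (s + 1)) < ε / 2 :=
          (hxlim (s + 1)).eventually (Filter.Tendsto.eventually_lt_const (by linarith) tendsto_id)
        have h2 : ∀ᶠ n in atTop, N s (f n - x s) < ε / 2 :=
          (hxlim s).eventually (Filter.Tendsto.eventually_lt_const (by linarith) tendsto_id)
        obtain ⟨n, hn1, hn2⟩ := (h1.and h2).exists
        have hfn : f n ∈ S s := hmemI (hfmem n) s
        have hfn1 : f n ∈ S (s + 1) := hmemI (hfmem n) (s + 1)
        have ht := (hnormX s).sub_le' (a := x (s + 1)) (b := f n) (c := x s) hx1s hfn (hxmem s)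
        have hsym : N s (x (s + 1) - f n) = N s (f n - x (s + 1)) :=
          (hnormX s).symm' hfn hx1s
        have hle : N s (f n - x (s + 1)) ≤ N (s + 1) (f n - x (s + 1)) :=
          hNmono s _ ((hnormX (s + 1)).sub_mem' hfn1 (hxmem (s + 1)))
        have : ε < ε := by
          calc ε ≤ N s (x (s + 1) - f n) + N s (f n - x s) := ht
            _ = N s (f n - x (s + 1)) + N s (f n - x s) := by rw [hsym]
            _ ≤ N (s + 1) (f n - x (s + 1)) + N s (f n - x s) := by linarith
            _ < ε / 2 + ε / 2 := by linarith
            _ = ε := by ring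
        exact lt_irrefl _ this
      have := (hnormX s).2.2.2.2.1 _ hdiff hNz
      exact sub_eq_zero.mp this
    have hxall : ∀ s, x s = x 0 := by
      intro s
      induction s with
      | zero => rfl
      | succ s ih => rw [hxeq s, ih]
    have hx0mem : x 0 ∈ ⋂ s, S s := Set.mem_iInter.mpr fun s => hxall s ▸ hxmem s
    refine ⟨x 0, hx0mem, ?_⟩
    -- show g i (x 0) = c i for all i
    funext i
    by_contra hne
    obtain ⟨K, hK⟩ := hBKcoord i
    set K' := max K 1 with hK'
    have hK'pos : 0 < K' := lt_of_lt_of_le one_pos (le_max_right K 1)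
    have hK'bd : ∀ d ∈ S0, |d i| ≤ K' * N0 d := by
      intro d hd
      calc |d i| ≤ K * N0 d := hK d hd
        _ ≤ K' * N0 d := mul_le_mul_of_nonneg_right (le_max_left K 1) (hΘnorm.2.2.2.1 d hd)
    set ε := |g i (x 0) - c i| with hε
    have hεpos : 0 < ε := abs_pos.mpr (sub_ne_zero.mpr hne)
    have hB0 : 0 < B 0 := lt_of_lt_of_le (hA 0) (hAB 0)
    -- pick n with both contributions small
    have h1 : ∀ᶠ n in atTop, N 0 (f n - x 0) < ε / (2 * K' * B 0) :=
      (hxlim 0).eventually (Filter.Tendsto.eventually_lt_const (by positivity) tendsto_id)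
    have h2 : ∀ᶠ n : ℕ in atTop, 1 / ((n : ℝ) + 1) < ε / (2 * K') := by
      have := tendsto_one_div_add_atTop_nhds_zero_nat (𝕜 := ℝ)
      exact this.eventually (Filter.Tendsto.eventually_lt_const (by positivity) tendsto_id)
    obtain ⟨n, hn1, hn2⟩ := (h1.and h2).exists
    have hfx : f n - x 0 ∈ ⋂ t, S t := hsubI (hfmem n) hx0mem
    have hGmem : (fun j => g j (f n - x 0)) ∈ S0 := (hframe _ hfx).1
    have hGle : N0 (fun j => g j (f n - x 0)) ≤ B 0 * N 0 (f n - x 0) := (hframe _ hfx).2 0 |>.2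
    have hcoord1 : |g i (f n) - g i (x 0)| ≤ K' * (B 0 * N 0 (f n - x 0)) := by
      have := hK'bd _ hGmem
      simp only [map_sub] at this
      calc |g i (f n) - g i (x 0)| ≤ K' * N0 (fun j => g j (f n - x 0)) := by
            have h := hK'bd _ hGmem
            simpa [map_sub] using h
        _ ≤ K' * (B 0 * N 0 (f n - x 0)) := mul_le_mul_of_nonneg_left hGle (le_of_lt hK'pos)
    have hGfc : Gf n - c ∈ S0 := hΘnorm.sub_mem' (hGfmem n) hc
    have hcoord2 : |g i (f n) - c i| ≤ K' * N0 (Gf n - c) := by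
      have := hK'bd _ hGfc
      simpa [hGf] using this
    have hfinal : ε < ε := by
      have htri : ε ≤ |g i (x 0) - g i (f n)| + |g i (f n) - c i| := by
        rw [hε]
        have : g i (x 0) - c i = (g i (x 0) - g i (f n)) + (g i (f n) - c i) := by ring
        rw [this]
        exact abs_add_le _ _
      have habs : |g i (x 0) - g i (f n)| = |g i (f n) - g i (x 0)| := abs_sub_comm _ _
      have e1 : |g i (f n) - g i (x 0)| < ε / 2 := by
        calc |g i (f n) - g i (x 0)| ≤ K' * (B 0 * N 0 (f n - x 0)) := hcoord1
          _ < K' * (B 0 * (ε / (2 * K' * B 0))) := by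
              apply mul_lt_mul_of_pos_left _ hK'pos
              exact mul_lt_mul_of_pos_left hn1 hB0
          _ = ε / 2 := by field_simp
      have e2 : |g i (f n) - c i| < ε / 2 := by
        calc |g i (f n) - c i| ≤ K' * N0 (Gf n - c) := hcoord2
          _ ≤ K' * (1 / (n + 1)) := by
              apply mul_le_mul_of_nonneg_left _ (le_of_lt hK'pos)
              exact le_of_lt (hfap n)
          _ < K' * (ε / (2 * K')) := mul_lt_mul_of_pos_left hn2 hK'pos
          _ = ε / 2 := by field_simp
      linarith [htri, habs ▸ e1]
    exact lt_irrefl _ hfinal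
  · -- Part 3
    intro s
    refine ⟨(A s)⁻¹, inv_pos.mpr (hA s), fun f hf => ?_⟩
    have h1 := (hframe f hf).2 s |>.1
    calc N s f = (A s)⁻¹ * (A s * N s f) := by
          rw [← mul_assoc, inv_mul_cancel₀ (hA s).ne', one_mul]
      _ ≤ (A s)⁻¹ * N0 (fun i => g i f) :=
          mul_le_mul_of_nonneg_left h1 (le_of_lt (inv_pos.mpr (hA s)))
  · -- Part 4
    exact ⟨B 0, lt_of_lt_of_le (hA 0) (hAB 0), fun f hf => (hframe f hf).2 0 |>.2⟩
  · -- Part 5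
    intro s
    have hB0 : 0 < B 0 := lt_of_lt_of_le (hA 0) (hAB 0)
    refine ⟨(A s)⁻¹ * B 0, mul_pos (inv_pos.mpr (hA s)) hB0, fun f hf => ?_⟩
    have h1 := (hframe f hf).2 s |>.1
    have h2 := (hframe f hf).2 0 |>.2
    have hAs := hA s
    have hN0 : 0 ≤ N 0 f := ((hBan 0).1).2.2.2.1 f (Set.mem_iInter.mp hf 0)
    have : A s * N s f ≤ B 0 * N 0 f := le_trans h1 h2
    calc N s f = (A s)⁻¹ * (A s * N s f) := by
          rw [← mul_assoc, inv_mul_cancel₀ (hA s).ne', one_mul]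
      _ ≤ (A s)⁻¹ * (B 0 * N 0 f) :=
          mul_le_mul_of_nonneg_left this (le_of_lt (inv_pos.mpr hAs))
      _ = (A s)⁻¹ * B 0 * N 0 f := by ring
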